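/- If I = (m, n, s, t) is a minimal normalized scheduling instance with ρ_I > 1, then n ≤ Σ_{i=1}^{n} t(i) ≤ (m − 1)/(ρ_I − 1). -/
import Mathlib


open Finset

/-- A scheduling instance on uniform processors: `m` processors with positive
speeds `s 1, …, s m`, and `n` tasks with positive sizes `t 1 ≥ … ≥ t n`
(tasks are given in non-increasing order of size, as assumed for LPT). -/
structure SchedInstance where
  m : ℕ
  n : ℕ
  s : ℕ → ℝ
  t : ℕ → ℝ
  hm : 1 ≤ m
  hn : 1 ≤ n
  hs : ∀ p, 1 ≤ p → p ≤ m → 0 < s p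
  ht : ∀ i, 1 ≤ i → i ≤ n → 0 < t i
  tsorted : ∀ i j, 1 ≤ i → i ≤ j → j ≤ n → t j ≤ t i

namespace SchedInstance

variable (I : SchedInstance)

/-- The set of processor indices `{1, …, m}`. -/
def procs : Finset ℕ := Finset.Icc 1 I.m

/-- The set of task indices `{1, …, n}`. -/
def tasks : Finset ℕ := Finset.Icc 1 I.n

lemma procs_nonempty : I.procs.Nonempty := Finset.nonempty_Icc.mpr I.hm

/-- A schedule assigns every task `i ∈ {1,…,n}` a processor `A i ∈ {1,…,m}`. -/
def IsSchedule (A : ℕ → ℕ) : Prop := ∀ i ∈ I.tasks, A i ∈ I.procs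

/-- Total size of the tasks assigned by `A` to processor `p`. -/
noncomputable def load (A : ℕ → ℕ) (p : ℕ) : ℝ :=
  ∑ i ∈ I.tasks.filter (fun i => A i = p), I.t i

/-- The makespan of a schedule `A` : the largest completion time
`(Σ_{A i = p} t i) / s p` over the processors `p`. -/
noncomputable def makespan (A : ℕ → ℕ) : ℝ :=
  I.procs.sup' I.procs_nonempty (fun p => I.load A p / I.s p)

/-- `OPT(I)`: the optimal (minimum) makespan over all schedules. -/
noncomputable def opt : ℝ := sInf {r | ∃ A, I.IsSchedule A ∧ I.makespan A = r}

/-- The completion time of processor `p` if task `i` is added to it while the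
current workloads are `w`. -/
noncomputable def cost (w : ℕ → ℝ) (i p : ℕ) : ℝ := (w p + I.t i) / I.s p

/-- The processor the LPT rule chooses for task `i` given current workloads `w` :
the smallest-index processor minimizing `(w p + t i) / s p`. -/
noncomputable def choose (w : ℕ → ℝ) (i : ℕ) : ℕ :=
  (I.procs.filter
    (fun p => I.cost w i p = I.procs.inf' I.procs_nonempty (I.cost w i))).min'
    (by
      obtain ⟨p, hp, hpe⟩ := Finset.exists_mem_eq_inf' I.procs_nonempty (I.cost w i)
      exact ⟨p, Finset.mem_filter.mpr ⟨hp, hpe.symm⟩⟩)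

/-- `lptW k p` : the workload of processor `p` after the LPT algorithm has
assigned tasks `1, …, k` (in this order). -/
noncomputable def lptW : ℕ → ℕ → ℝ
  | 0, _ => 0
  | (k + 1), p =>
      lptW k p + if I.choose (lptW k) (k + 1) = p ∧ k + 1 ≤ I.n then I.t (k + 1) else 0

/-- `A_I` : the LPT assignment; task `i` goes to the least-index processor
minimizing the resulting completion time, given the previous assignments. -/
noncomputable def lptA (i : ℕ) : ℕ := I.choose (I.lptW (i - 1)) i

/-- `LPT(I)` : the makespan of the LPT schedule. -/
noncomputable def lptTime : ℝ := I.makespan I.lptA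

/-- `ρ_I = LPT(I) / OPT(I)` : the approximation ratio of LPT on instance `I`. -/
noncomputable def ratio : ℝ := I.lptTime / I.opt

/-- `I` is normalized: `OPT(I) = 1`, speeds are non-increasing, and the
smallest task has size `t n = 1`. -/
def Normalized : Prop :=
  I.opt = 1 ∧ (∀ p q, 1 ≤ p → p ≤ q → q ≤ I.m → I.s q ≤ I.s p) ∧ I.t I.n = 1

/-- `I` is minimal: every strictly smaller instance has a strictly smaller
LPT approximation ratio. -/
def Minimal : Prop :=
  ∀ J : SchedInstance, J.m ≤ I.m → J.n ≤ I.n →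
    ¬(J.m = I.m ∧ J.n = I.n) → J.ratio < I.ratio

/-- `T_I(p)` : the tasks assigned to processor `p` by the LPT schedule. -/
noncomputable def T (p : ℕ) : Finset ℕ := I.tasks.filter (fun i => I.lptA i = p)

/-- `T'_I(p) = T_I(p) \ {n}` : the LPT tasks of `p`, without the last task. -/
noncomputable def T' (p : ℕ) : Finset ℕ := (I.T p).erase I.n

/-- `w'_I(p)` : the workload of `p` in the LPT schedule without the last task. -/
noncomputable def w' (p : ℕ) : ℝ := ∑ i ∈ I.T' p, I.t i

/-- `T*(p)` for a schedule `A` : the tasks assigned to processor `p` by `A`. -/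
noncomputable def Tstar (A : ℕ → ℕ) (p : ℕ) : Finset ℕ :=
  I.tasks.filter (fun i => A i = p)

/-- `w*(p)` for a schedule `A` : the workload of processor `p` under `A`. -/
noncomputable def wstar (A : ℕ → ℕ) (p : ℕ) : ℝ := ∑ i ∈ I.Tstar A p, I.t i

/-- `A` is an optimal schedule whose workloads satisfy `w*(1) ≥ … ≥ w*(m)`. -/
def IsSortedOptimal (A : ℕ → ℕ) : Prop :=
  I.IsSchedule A ∧ I.makespan A = I.opt ∧
    ∀ p q, 1 ≤ p → p ≤ q → q ≤ I.m → I.wstar A q ≤ I.wstar A p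

/-- Processor `p` dominates processor `q` (with respect to the optimal
schedule `A`): `s p ≤ s q` and there is `f : T*(q) → T'(p)` with
`t i ≥ Σ_{f j = i} t j` for every `i ∈ T'(p)`. -/
def Dominates (A : ℕ → ℕ) (p q : ℕ) : Prop :=
  I.s p ≤ I.s q ∧ ∃ f : ℕ → ℕ,
    (∀ j ∈ I.Tstar A q, f j ∈ I.T' p) ∧
    ∀ i ∈ I.T' p, (∑ j ∈ (I.Tstar A q).filter (fun j => f j = i), I.t j) ≤ I.t i

end SchedInstance

/-- The polynomial `P_m(x) = 2x^m − x^{m−1} − ⋯ − x − 2`. -/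
noncomputable def Pm (m : ℕ) (x : ℝ) : ℝ := 2 * x ^ m - (∑ k ∈ Finset.Ico 1 m, x ^ k) - 2

namespace SchedInstance

variable (I : SchedInstance)

lemma one_mem_procs : 1 ∈ I.procs := Finset.mem_Icc.mpr ⟨le_refl 1, I.hm⟩

lemma t_pos_of_mem {i : ℕ} (hi : i ∈ I.tasks) : 0 < I.t i := by
  rw [tasks, Finset.mem_Icc] at hi; exact I.ht i hi.1 hi.2

lemma s_pos_of_mem {p : ℕ} (hp : p ∈ I.procs) : 0 < I.s p := by
  rw [procs, Finset.mem_Icc] at hp; exact I.hs p hp.1 hp.2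

lemma load_nonneg (A : ℕ → ℕ) (p : ℕ) : 0 ≤ I.load A p :=
  Finset.sum_nonneg fun i hi => (I.t_pos_of_mem (Finset.mem_of_mem_filter i hi)).le

lemma load_le_makespan (A : ℕ → ℕ) {p : ℕ} (hp : p ∈ I.procs) :
    I.load A p / I.s p ≤ I.makespan A :=
  Finset.le_sup' (fun p => I.load A p / I.s p) hp

lemma makespan_nonneg (A : ℕ → ℕ) : 0 ≤ I.makespan A :=
  le_trans (div_nonneg (I.load_nonneg A 1) (I.s_pos_of_mem I.one_mem_procs).le)
    (I.load_le_makespan A I.one_mem_procs)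

/-- The set of achievable makespans. -/
def optSet : Set ℝ := {r | ∃ A, I.IsSchedule A ∧ I.makespan A = r}

lemma opt_eq_sInf : I.opt = sInf I.optSet := rfl

lemma optSet_nonempty : I.optSet.Nonempty :=
  ⟨_, fun _ => 1, fun _ _ => I.one_mem_procs, rfl⟩

lemma optSet_bddBelow : BddBelow I.optSet :=
  ⟨0, fun r hr => by obtain ⟨A, _, hA⟩ := hr; exact hA ▸ I.makespan_nonneg A⟩

lemma opt_le_makespan {A : ℕ → ℕ} (hA : I.IsSchedule A) : I.opt ≤ I.makespan A :=
  csInf_le I.optSet_bddBelow ⟨A, hA, rfl⟩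

lemma exists_schedule_lt {ε : ℝ} (hε : 0 < ε) :
    ∃ A, I.IsSchedule A ∧ I.makespan A < I.opt + ε := by
  have h := (csInf_lt_iff I.optSet_bddBelow I.optSet_nonempty).mp
    (lt_add_of_pos_right (sInf I.optSet) hε)
  obtain ⟨r, ⟨A, hA, hr⟩, hlt⟩ := h
  exact ⟨A, hA, by rw [hr]; exact hlt⟩

lemma choose_mem_filter (w : ℕ → ℝ) (i : ℕ) :
    I.choose w i ∈ I.procs.filter
      (fun p => I.cost w i p = I.procs.inf' I.procs_nonempty (I.cost w i)) :=
  Finset.min'_mem _ _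

lemma choose_mem (w : ℕ → ℝ) (i : ℕ) : I.choose w i ∈ I.procs :=
  Finset.mem_of_mem_filter _ (I.choose_mem_filter w i)

lemma cost_choose_le (w : ℕ → ℝ) (i : ℕ) {p : ℕ} (hp : p ∈ I.procs) :
    I.cost w i (I.choose w i) ≤ I.cost w i p := by
  have h := (Finset.mem_filter.mp (I.choose_mem_filter w i)).2
  rw [h]
  exact Finset.inf'_le _ hp

lemma lptA_mem (i : ℕ) : I.lptA i ∈ I.procs := I.choose_mem _ i

lemma lpt_schedule : I.IsSchedule I.lptA := fun i _ => I.lptA_mem i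

lemma lptW_succ (k p : ℕ) :
    I.lptW (k + 1) p = I.lptW k p +
      if I.choose (I.lptW k) (k + 1) = p ∧ k + 1 ≤ I.n then I.t (k + 1) else 0 := rfl

lemma lptA_succ (k : ℕ) : I.lptA (k + 1) = I.choose (I.lptW k) (k + 1) := rfl

lemma lptW_eq_sum (k p : ℕ) :
    I.lptW k p = ∑ i ∈ Finset.Icc 1 k, (if I.lptA i = p ∧ i ≤ I.n then I.t i else 0) := by
  induction k with
  | zero => simp [lptW]
  | succ k ih =>
    rw [Finset.sum_Icc_succ_top (Nat.succ_le_succ (Nat.zero_le k)), ← ih,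
      I.lptW_succ, I.lptA_succ]

lemma load_lptA (p : ℕ) : I.load I.lptA p = I.lptW I.n p := by
  rw [I.lptW_eq_sum, load, Finset.sum_filter]
  refine Finset.sum_congr rfl fun i hi => ?_
  simp only [tasks, Finset.mem_Icc] at hi
  simp [hi.2]

lemma sum_lptW (k : ℕ) :
    ∑ p ∈ I.procs, I.lptW k p
      = ∑ i ∈ Finset.Icc 1 k, (if i ≤ I.n then I.t i else 0) := by
  simp only [lptW_eq_sum]
  rw [Finset.sum_comm]
  refine Finset.sum_congr rfl fun i _ => ?_
  by_cases h : i ≤ I.n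
  · simp only [h, and_true]
    rw [Finset.sum_ite_eq, if_pos (I.lptA_mem i)]
    simp
  · simp [h]

lemma opt_pos (hsorted : ∀ p q, 1 ≤ p → p ≤ q → q ≤ I.m → I.s q ≤ I.s p) :
    0 < I.opt := by
  have h1t : 1 ∈ I.tasks := Finset.mem_Icc.mpr ⟨le_refl 1, I.hn⟩
  have ht1 : 0 < I.t 1 := I.ht 1 le_rfl I.hn
  have hs1 : 0 < I.s 1 := I.hs 1 le_rfl I.hm
  have key : ∀ r ∈ I.optSet, I.t 1 / I.s 1 ≤ r := by
    rintro r ⟨A, hA, rfl⟩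
    have hp : A 1 ∈ I.procs := hA 1 h1t
    have hpm := Finset.mem_Icc.mp hp
    have hsp : 0 < I.s (A 1) := I.s_pos_of_mem hp
    have hload : I.t 1 ≤ I.load A (A 1) := by
      refine Finset.single_le_sum
        (fun i hi => (I.t_pos_of_mem (Finset.mem_of_mem_filter i hi)).le) ?_
      exact Finset.mem_filter.mpr ⟨h1t, rfl⟩
    calc I.t 1 / I.s 1 ≤ I.t 1 / I.s (A 1) := by
          gcongr
          exact hsorted 1 (A 1) le_rfl hpm.1 hpm.2
      _ ≤ I.load A (A 1) / I.s (A 1) := by gcongr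
      _ ≤ I.makespan A := I.load_le_makespan A hp
  exact lt_of_lt_of_le (div_pos ht1 hs1) (le_csInf I.optSet_nonempty key)

lemma card_procs : (I.procs.card : ℝ) = I.m := by
  rw [procs, Nat.card_Icc]; simp

lemma sum_t_le_sum_s (hopt : I.opt = 1) :
    ∑ i ∈ I.tasks, I.t i ≤ ∑ p ∈ I.procs, I.s p := by
  have hspos : 0 < ∑ p ∈ I.procs, I.s p :=
    Finset.sum_pos (fun p hp => I.s_pos_of_mem hp) I.procs_nonempty
  refine le_of_forall_pos_le_add fun ε hε => ?_
  obtain ⟨A, hA, hmA⟩ := I.exists_schedule_lt (div_pos hε hspos)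
  rw [hopt] at hmA
  have hfib : ∑ p ∈ I.procs, I.load A p = ∑ i ∈ I.tasks, I.t i :=
    Finset.sum_fiberwise_of_maps_to hA I.t
  rw [← hfib]
  have hle : ∀ p ∈ I.procs, I.load A p ≤ (1 + ε / (∑ p ∈ I.procs, I.s p)) * I.s p := by
    intro p hp
    have h1 : I.load A p / I.s p ≤ I.makespan A := I.load_le_makespan A hp
    have h2 := I.s_pos_of_mem hp
    rw [div_le_iff₀ h2] at h1
    exact le_trans h1 (mul_le_mul_of_nonneg_right hmA.le h2.le)
  calc ∑ p ∈ I.procs, I.load A p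
      ≤ ∑ p ∈ I.procs, (1 + ε / (∑ p ∈ I.procs, I.s p)) * I.s p :=
        Finset.sum_le_sum hle
    _ = (∑ p ∈ I.procs, I.s p) + (ε / (∑ p ∈ I.procs, I.s p)) * ∑ p ∈ I.procs, I.s p := by
        rw [← Finset.mul_sum]; ring
    _ = (∑ p ∈ I.procs, I.s p) + ε := by rw [div_mul_cancel₀ _ hspos.ne']

lemma ratio_eq (hopt : I.opt = 1) : I.ratio = I.lptTime := by
  rw [ratio, hopt, div_one]

end SchedInstance

namespace SchedInstance

variable (I : SchedInstance)

lemma lptTime_le_cost (hopt : I.opt = 1)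
    (hsorted : ∀ p q, 1 ≤ p → p ≤ q → q ≤ I.m → I.s q ≤ I.s p)
    (hmin : I.Minimal) (hρ : 1 < I.ratio) :
    I.lptTime ≤ I.cost (I.lptW (I.n - 1)) I.n (I.lptA I.n) := by
  obtain ⟨k, hk⟩ : ∃ k, I.n = k + 1 := ⟨I.n - 1, (Nat.succ_pred_eq_of_pos I.hn).symm⟩
  have hk' : I.n - 1 = k := by omega
  by_contra hcon
  push_neg at hcon
  set c := I.lptA I.n with hc
  -- the makespan is attained at some q
  obtain ⟨q, hq, hqe⟩ :=
    Finset.exists_mem_eq_sup' I.procs_nonempty (fun p => I.load I.lptA p / I.s p)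
  have hqe' : I.lptTime = I.lptW I.n q / I.s q := by
    rw [lptTime, makespan, hqe, I.load_lptA q]
  -- the completion time of c equals the cost of placing task n there
  have hcn : I.choose (I.lptW k) (k + 1) = c := by rw [hc, hk, I.lptA_succ]
  have hCc : I.lptW I.n c / I.s c = I.cost (I.lptW (I.n - 1)) I.n c := by
    rw [cost, hk', hk, I.lptW_succ, if_pos ⟨hcn, by omega⟩, ← hk]
  have hqc : q ≠ c := by
    intro h
    rw [h, hCc] at hqe'
    exact absurd hqe'.le (not_le.mpr hcon)
  -- so the makespan is w'(q)/s(q)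
  have hWq : I.lptW I.n q = I.lptW k q := by
    rw [hk, I.lptW_succ, if_neg]
    · ring
    · rintro ⟨h1, -⟩; exact hqc (hcn ▸ h1.symm)
  have hρeq : I.ratio = I.lptTime := I.ratio_eq hopt
  rcases Nat.eq_zero_or_pos k with hk0 | hk1
  · -- n = 1 : makespan would be 0, contradicting ratio > 1
    subst hk0
    have : I.lptTime = 0 := by
      rw [hqe', hWq]
      show (0:ℝ) / I.s q = 0
      simp
    rw [hρeq, this] at hρ
    linarith
  · -- n ≥ 2 : contradict minimality via the instance without task n
    set J : SchedInstance :=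
      ⟨I.m, k, I.s, I.t, I.hm, hk1, I.hs,
        fun i h1 h2 => I.ht i h1 (by omega),
        fun i j h1 h2 h3 => I.tsorted i j h1 h2 (by omega)⟩ with hJ
    have hJW : ∀ j, j ≤ k → J.lptW j = I.lptW j := by
      intro j hj
      induction j with
      | zero => rfl
      | succ j ih =>
        funext p
        rw [J.lptW_succ, I.lptW_succ, ih (by omega)]
        have hch : J.choose = I.choose := rfl
        rw [hch]
        congr 1
        refine if_congr ?_ rfl rfl
        constructor
        · rintro ⟨h1, -⟩; exact ⟨h1, by omega⟩
        · rintro ⟨h1, -⟩; exact ⟨h1, hj⟩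
    have hfun : (fun p => J.load J.lptA p / J.s p) = (fun p => I.lptW k p / I.s p) := by
      funext p
      rw [J.load_lptA p]
      show J.lptW k p / I.s p = _
      rw [hJW k le_rfl]
    have hJmk : J.lptTime = I.procs.sup' I.procs_nonempty (fun p => I.lptW k p / I.s p) := by
      show I.procs.sup' I.procs_nonempty (fun p => J.load J.lptA p / J.s p) = _
      rw [hfun]
    -- LPT(I) ≤ LPT(J)
    have hIJ : I.lptTime ≤ J.lptTime := by
      rw [hqe', hWq, hJmk]
      exact Finset.le_sup' (fun p => I.lptW k p / I.s p) hq
    -- OPT(J) ≤ 1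
    have hJopt : J.opt ≤ 1 := by
      refine le_of_forall_pos_le_add fun ε hε => ?_
      obtain ⟨A, hA, hmA⟩ := I.exists_schedule_lt hε
      rw [hopt] at hmA
      have hAJ : J.IsSchedule A := by
        intro i hi
        have hi' : i ∈ I.tasks := by
          have : i ∈ Finset.Icc 1 k := hi
          rw [Finset.mem_Icc] at this
          exact Finset.mem_Icc.mpr ⟨this.1, by omega⟩
        exact hA i hi'
      have hmkJ : J.makespan A ≤ I.makespan A := by
        refine Finset.sup'_le _ _ fun p hp => ?_
        have hp' : p ∈ I.procs := hp
        have hload : J.load A p ≤ I.load A p := by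
          refine Finset.sum_le_sum_of_subset_of_nonneg
            (Finset.filter_subset_filter _ ?_)
            (fun i hi _ => (I.t_pos_of_mem (Finset.mem_of_mem_filter i hi)).le)
          show Finset.Icc 1 k ⊆ Finset.Icc 1 I.n
          exact Finset.Icc_subset_Icc_right (by omega)
        calc J.load A p / J.s p ≤ I.load A p / I.s p := by
              show J.load A p / I.s p ≤ I.load A p / I.s p
              gcongr
              exact (I.s_pos_of_mem hp').le
          _ ≤ I.makespan A := I.load_le_makespan A hp'
      calc J.opt ≤ J.makespan A := J.opt_le_makespan hAJ
        _ ≤ I.makespan A := hmkJ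
        _ ≤ 1 + ε := hmA.le
    have hJpos : 0 < J.opt := J.opt_pos hsorted
    -- ratio J ≥ ratio I, contradicting minimality
    have hJr : I.ratio ≤ J.ratio := by
      have hLpos : (0:ℝ) ≤ J.lptTime := by
        rw [hρeq] at hρ; linarith [hIJ]
      calc I.ratio = I.lptTime := hρeq
        _ ≤ J.lptTime := hIJ
        _ = J.lptTime / 1 := (div_one _).symm
        _ ≤ J.lptTime / J.opt := by gcongr
        _ = J.ratio := rfl
    have hlt : J.ratio < I.ratio := by
      refine hmin J le_rfl (show k ≤ I.n by omega) ?_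
      rintro ⟨-, h2⟩
      exact absurd h2 (by show k ≠ I.n; omega)
    linarith

end SchedInstance

namespace SchedInstance

variable (I : SchedInstance)

lemma ratio_mul_s_le (hopt : I.opt = 1)
    (hsorted : ∀ p q, 1 ≤ p → p ≤ q → q ≤ I.m → I.s q ≤ I.s p)
    (hmin : I.Minimal) (hρ : 1 < I.ratio) (htn : I.t I.n = 1)
    {p : ℕ} (hp : p ∈ I.procs) :
    I.ratio * I.s p ≤ I.lptW (I.n - 1) p + 1 := by
  have hsp := I.s_pos_of_mem hp
  have h1 : I.lptTime ≤ I.cost (I.lptW (I.n - 1)) I.n (I.lptA I.n) :=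
    I.lptTime_le_cost hopt hsorted hmin hρ
  have h2 : I.cost (I.lptW (I.n - 1)) I.n (I.lptA I.n)
      ≤ I.cost (I.lptW (I.n - 1)) I.n p :=
    I.cost_choose_le (I.lptW (I.n - 1)) I.n hp
  have h3 : I.cost (I.lptW (I.n - 1)) I.n p = (I.lptW (I.n - 1) p + 1) / I.s p := by
    rw [cost, htn]
  rw [← le_div_iff₀ hsp, I.ratio_eq hopt, ← h3]
  exact le_trans h1 h2

end SchedInstance

/-- If `I = (m, n, s, t)` is a minimal normalized instance with `ρ_I > 1`, then
`n ≤ Σ_i t(i) ≤ (m − 1)/(ρ_I − 1)`. -/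
theorem sum_t_le (I : SchedInstance)
    (hnorm : I.Normalized) (hmin : I.Minimal) (hρ : 1 < I.ratio) :
    (I.n : ℝ) ≤ ∑ i ∈ Finset.Icc 1 I.n, I.t i ∧
    ∑ i ∈ Finset.Icc 1 I.n, I.t i ≤ ((I.m : ℝ) - 1) / (I.ratio - 1) := by
  obtain ⟨hopt, hsorted, htn⟩ := hnorm
  have ht1 : ∀ i ∈ Finset.Icc 1 I.n, (1:ℝ) ≤ I.t i := by
    intro i hi
    rw [Finset.mem_Icc] at hi
    calc (1:ℝ) = I.t I.n := htn.symm
      _ ≤ I.t i := I.tsorted i I.n hi.1 hi.2 le_rfl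
  constructor
  · calc (I.n:ℝ) = ∑ _i ∈ Finset.Icc 1 I.n, (1:ℝ) := by simp
      _ ≤ _ := Finset.sum_le_sum ht1
  · have hρ1 : 0 < I.ratio - 1 := sub_pos.mpr hρ
    rw [le_div_iff₀ hρ1]
    have hW : ∑ i ∈ Finset.Icc 1 I.n, I.t i ≤ ∑ p ∈ I.procs, I.s p :=
      I.sum_t_le_sum_s hopt
    have hkey : ∀ p ∈ I.procs, I.ratio * I.s p ≤ I.lptW (I.n - 1) p + 1 :=
      fun p hp => I.ratio_mul_s_le hopt hsorted hmin hρ htn hp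
    have hsum' : ∑ p ∈ I.procs, I.lptW (I.n - 1) p
        = (∑ i ∈ Finset.Icc 1 I.n, I.t i) - 1 := by
      rw [I.sum_lptW]
      have h1 : ∀ i ∈ Finset.Icc 1 (I.n - 1), (if i ≤ I.n then I.t i else 0) = I.t i := by
        intro i hi
        rw [Finset.mem_Icc] at hi
        exact if_pos (le_trans hi.2 (Nat.sub_le _ _))
      rw [Finset.sum_congr rfl h1]
      have h2 := Finset.sum_Icc_succ_top (a := 1) (b := I.n - 1) (show 1 ≤ I.n - 1 + 1 by omega) I.t
      rw [show I.n - 1 + 1 = I.n from by have := I.hn; omega] at h2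
      rw [h2, htn]; ring
    have hsums : ∑ p ∈ I.procs, (I.lptW (I.n - 1) p + 1)
        = (∑ i ∈ Finset.Icc 1 I.n, I.t i) - 1 + I.m := by
      rw [Finset.sum_add_distrib, hsum', Finset.sum_const, nsmul_eq_mul, mul_one,
        I.card_procs]
    have hA : I.ratio * ∑ p ∈ I.procs, I.s p
        ≤ (∑ i ∈ Finset.Icc 1 I.n, I.t i) - 1 + I.m := by
      rw [← hsums, Finset.mul_sum]
      exact Finset.sum_le_sum hkey
    have hB : I.ratio * (∑ i ∈ Finset.Icc 1 I.n, I.t i)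
        ≤ I.ratio * ∑ p ∈ I.procs, I.s p :=
      mul_le_mul_of_nonneg_left hW (by linarith)
    have hx : (∑ i ∈ Finset.Icc 1 I.n, I.t i) * (I.ratio - 1)
        = I.ratio * (∑ i ∈ Finset.Icc 1 I.n, I.t i) - ∑ i ∈ Finset.Icc 1 I.n, I.t i := by
      ring
    linarith
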